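/- Let q1, r1, q2, r2 be positive integers with q1 + q2 ≥ 3 and 2·rS < qS − 1. Then the point P2 = (q1+q2−3, 2rB−2rS+q1+q2−3) does NOT lie in the convex hull of the other seven points {P1, −P1, −P2, P3, −P3, P4, −P4}; in this case the dual Thurston polytope is a genuine octagon with P2 among its vertices. -/

import Mathlib

open Set in
lemma sep_extreme {E : Type*} [AddCommGroup E] [Module ℝ E]
    (f : E →ₗ[ℝ] ℝ) (x : E) (T : Set E) (hT : T.Nonempty)
    (h : ∀ y ∈ T, f y < f x) :
    x ∉ convexHull ℝ T ∧ x ∈ Set.extremePoints ℝ (convexHull ℝ (insert x T)) := by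
  have hsub : convexHull ℝ T ⊆ {w | f w < f x} :=
    convexHull_min h (convex_halfSpace_lt (LinearMap.isLinear f) _)
  have key : ∀ y ∈ convexHull ℝ (insert x T), f y ≤ f x ∧ (f y = f x → y = x) := by
    intro y hy
    rw [convexHull_insert hT, mem_convexJoin] at hy
    obtain ⟨x', hx', z, hz, hyz⟩ := hy
    rw [Set.mem_singleton_iff] at hx'
    rw [hx'] at hyz
    obtain ⟨u, v, hu, hv, huv, rfl⟩ := hyz
    have hfz : f z < f x := hsub hz
    have hval : f (u • x + v • z) = u * f x + v * f z := by
      simp only [map_add, map_smul, smul_eq_mul]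
    have hsum2 : u * f x + v * f x = f x := by rw [← add_mul, huv, one_mul]
    constructor
    · rw [hval]; nlinarith [mul_nonneg hv (sub_pos.mpr hfz).le]
    · rw [hval]; intro he
      have hv0 : v = 0 := by
        rcases hv.lt_or_eq with hvpos | hv0
        · nlinarith [mul_lt_mul_of_pos_left hfz hvpos]
        · exact hv0.symm
      have hu1 : u = 1 := by linarith
      simp [hu1, hv0]
  constructor
  · intro hx
    simpa using hsub hx
  · refine ⟨subset_convexHull ℝ _ (Set.mem_insert x T), ?_⟩
    intro x1 hx1 x2 hx2 hseg
    obtain ⟨t, s, ht, hs, hts, hx⟩ := hseg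
    have h1 := key x1 hx1
    have h2 := key x2 hx2
    have hfx : f x = t * f x1 + s * f x2 := by
      rw [← hx]; simp only [map_add, map_smul, smul_eq_mul]
    have hsum : t * f x + s * f x = f x := by rw [← add_mul, hts, one_mul]
    have e1 : f x1 = f x := by
      refine le_antisymm h1.1 (le_of_mul_le_mul_left ?_ ht)
      nlinarith [mul_le_mul_of_nonneg_left h2.1 hs.le]
    have e2 : f x2 = f x := by
      refine le_antisymm h2.1 (le_of_mul_le_mul_left ?_ hs)
      nlinarith [mul_le_mul_of_nonneg_left h1.1 ht.le]
    exact h1.2 e1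

set_option maxHeartbeats 1000000 in
/-- For positive integers `q1, r1, q2, r2` with `q1 + q2 ≥ 3` and `2·rS < qS − 1`,
the point `P2` does NOT lie in the convex hull of the other seven points; in this case the
dual Thurston polytope is a genuine octagon with `P2` among its vertices (i.e. `P2` is an
extreme point of the convex hull `H` of all eight points). -/
theorem thurston_polytope_P2_vertex (q1 r1 q2 r2 : ℕ)
    (hq1 : 0 < q1) (hr1 : 0 < r1) (hq2 : 0 < q2) (hr2 : 0 < r2)
    (hq : 3 ≤ q1 + q2)
    (hrq : 2 * min (r1 : ℝ) (r2 : ℝ) < min (q1 : ℝ) (q2 : ℝ) - 1) :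
    let qB : ℝ := max (q1 : ℝ) (q2 : ℝ)
    let qS : ℝ := min (q1 : ℝ) (q2 : ℝ)
    let rB : ℝ := max (r1 : ℝ) (r2 : ℝ)
    let rS : ℝ := min (r1 : ℝ) (r2 : ℝ)
    let P1 : ℝ × ℝ := (qB - qS - 1, 2 * r1 + 2 * r2 + qB - qS - 1)
    let P2 : ℝ × ℝ := ((q1 : ℝ) + q2 - 3, 2 * rB - 2 * rS + q1 + q2 - 3)
    let P3 : ℝ × ℝ := ((q1 : ℝ) + q2 - 1, 2 * rB - 2 * rS + q1 + q2 - 3)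
    let P4 : ℝ × ℝ := ((q1 : ℝ) + q2 - 1, -(2 * (r1 : ℝ)) - 2 * r2 + q1 + q2 - 1)
    P2 ∉ convexHull ℝ ({P1, -P1, -P2, P3, -P3, P4, -P4} : Set (ℝ × ℝ)) ∧
      P2 ∈ Set.extremePoints ℝ
        (convexHull ℝ ({P1, -P1, P2, -P2, P3, -P3, P4, -P4} : Set (ℝ × ℝ))) := by
  intro qB qS rB rS P1 P2 P3 P4
  have hq1' : (1:ℝ) ≤ q1 := by exact_mod_cast hq1
  have hq2' : (1:ℝ) ≤ q2 := by exact_mod_cast hq2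
  have hr1' : (1:ℝ) ≤ r1 := by exact_mod_cast hr1
  have hr2' : (1:ℝ) ≤ r2 := by exact_mod_cast hr2
  have hqs : qS ≤ qB := min_le_max
  have hrs : rS ≤ rB := min_le_max
  have h1q : 1 ≤ qS := le_min hq1' hq2'
  have h1r : 1 ≤ rS := le_min hr1' hr2'
  have hqsum : qS + qB = (q1:ℝ) + q2 := min_add_max _ _
  have hrsum : rS + rB = (r1:ℝ) + r2 := min_add_max _ _
  have hrq' : 2*rS < qS - 1 := hrq
  have hP1 : P1 = (qB - qS - 1, 2 * r1 + 2 * r2 + qB - qS - 1) := rfl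
  have hP2 : P2 = ((q1 : ℝ) + q2 - 3, 2 * rB - 2 * rS + q1 + q2 - 3) := rfl
  have hP3 : P3 = ((q1 : ℝ) + q2 - 1, 2 * rB - 2 * rS + q1 + q2 - 3) := rfl
  have hP4 : P4 = ((q1 : ℝ) + q2 - 1, -(2 * (r1 : ℝ)) - 2 * r2 + q1 + q2 - 1) := rfl
  clear_value qB qS rB rS P1 P2 P3 P4
  have hD : (0:ℝ) < qS - 1 := by linarith
  have hE : (0:ℝ) < qS - 1 - 2*rS := by linarith
  have hG : (0:ℝ) ≤ qB - qS := by linarith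
  have hR : (0:ℝ) ≤ rB - rS := by linarith
  have hrS : (0:ℝ) < rS := by linarith
  have h3 : (0:ℝ) < qS - 3 := by linarith
  set f : ℝ × ℝ →ₗ[ℝ] ℝ :=
    (2*rS - qS + 1) • LinearMap.fst ℝ ℝ ℝ + (2*(qS-1)) • LinearMap.snd ℝ ℝ ℝ with hfdef
  have hf : ∀ p : ℝ × ℝ, f p = (2*rS - qS + 1) * p.1 + (2*(qS-1)) * p.2 := by
    intro p; simp [hfdef]
  have key : ∀ y ∈ ({P1, -P1, -P2, P3, -P3, P4, -P4} : Set (ℝ × ℝ)), f y < f P2 := by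
    intro y hy
    simp only [Set.mem_insert_iff, Set.mem_singleton_iff] at hy
    rcases hy with rfl|rfl|rfl|rfl|rfl|rfl|rfl <;>
      simp only [hP1, hP2, hP3, hP4, hf, Prod.fst_neg, Prod.snd_neg] <;>
      nlinarith [mul_pos hD hE, mul_pos hD hrS, mul_pos hE hrS,
        mul_nonneg hD.le hG, mul_nonneg hD.le hR, mul_nonneg hE.le hG,
        mul_nonneg hE.le hR, mul_nonneg hG hrS.le, mul_nonneg hG hR,
        mul_pos hD hD, mul_pos hD h3]
  have hset : ({P1, -P1, P2, -P2, P3, -P3, P4, -P4} : Set (ℝ × ℝ))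
      = insert P2 ({P1, -P1, -P2, P3, -P3, P4, -P4} : Set (ℝ × ℝ)) := by
    ext w
    simp only [Set.mem_insert_iff, Set.mem_singleton_iff]
    tauto
  obtain ⟨hnot, hext⟩ := sep_extreme f P2 _ ⟨P1, Set.mem_insert _ _⟩ key
  rw [hset]
  exact ⟨hnot, hext⟩
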